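/- Let $X$ and $Y$ be independent random vectors, let $Y'$ be an independent copy of $Y$, and let $f$ be a measurable real-valued function. Then for any $a\in\mathbb{R}$: $\mathbb{P}(f(X,Y)=a)^2 \le \mathbb{P}\big(f(X,Y)-f(X,Y')=0\big)$. -/

import Mathlib

open MeasureTheory ProbabilityTheory

/-- Decoupling, one variable: if `X, Y, Y'` are mutually independent random vectors
with `Y' ~ Y`, and `f` is measurable, then for any `a ∈ ℝ`,
`P(f(X,Y) = a)² ≤ P(f(X,Y) - f(X,Y') = 0)`. -/
theorem stmt_6 (k l : ℕ)
    (Ω : Type*) [MeasureSpace Ω] [IsProbabilityMeasure (ℙ : Measure Ω)]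
    (X : Ω → (Fin k → ℝ)) (Y Y' : Ω → (Fin l → ℝ))
    (hX : Measurable X) (hY : Measurable Y) (hY' : Measurable Y')
    (f : (Fin k → ℝ) → (Fin l → ℝ) → ℝ)
    (hf : Measurable (fun q : (Fin k → ℝ) × (Fin l → ℝ) => f q.1 q.2))
    (hYY' : IndepFun Y Y' ℙ)
    (hXYY' : IndepFun X (fun ω => (Y ω, Y' ω)) ℙ)
    (hid : IdentDistrib Y' Y ℙ ℙ) (a : ℝ) :
    (ℙ {ω | f (X ω) (Y ω) = a}).toReal ^ 2 ≤
      (ℙ {ω | f (X ω) (Y ω) - f (X ω) (Y' ω) = 0}).toReal := by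
  set μ : Measure (Fin k → ℝ) := Measure.map X ℙ with hμ
  set ν : Measure (Fin l → ℝ) := Measure.map Y ℙ with hν
  have hνY' : Measure.map Y' ℙ = ν := hid.map_eq
  haveI : IsProbabilityMeasure μ := Measure.isProbabilityMeasure_map hX.aemeasurable
  haveI : IsProbabilityMeasure ν := Measure.isProbabilityMeasure_map hY.aemeasurable
  -- joint law of (X, (Y, Y')) is μ ⊗ (ν ⊗ ν)
  have hmap2 : Measure.map (fun ω => (Y ω, Y' ω)) ℙ = ν.prod ν := by
    rw [(indepFun_iff_map_prod_eq_prod_map_map hY.aemeasurable hY'.aemeasurable).1 hYY', hνY']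
  have hmap3 : Measure.map (fun ω => (X ω, (Y ω, Y' ω))) ℙ = μ.prod (ν.prod ν) := by
    rw [(indepFun_iff_map_prod_eq_prod_map_map hX.aemeasurable
      (hY.prodMk hY').aemeasurable).1 hXYY', hmap2]
  have hZ : Measurable (fun ω => (X ω, (Y ω, Y' ω))) := hX.prodMk (hY.prodMk hY')
  -- measurable auxiliary functions on the product space
  have hf1 : Measurable (fun p : (Fin k → ℝ) × ((Fin l → ℝ) × (Fin l → ℝ)) => f p.1 p.2.1) :=
    hf.comp (measurable_fst.prodMk (measurable_fst.comp measurable_snd))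
  have hf2 : Measurable (fun p : (Fin k → ℝ) × ((Fin l → ℝ) × (Fin l → ℝ)) => f p.1 p.2.2) :=
    hf.comp (measurable_fst.prodMk (measurable_snd.comp measurable_snd))
  set S : Set ((Fin k → ℝ) × ((Fin l → ℝ) × (Fin l → ℝ))) := {p | f p.1 p.2.1 = a} with hS
  have hSm : MeasurableSet S := hf1 (measurableSet_singleton a)
  set T : Set ((Fin k → ℝ) × ((Fin l → ℝ) × (Fin l → ℝ))) :=
    {p | f p.1 p.2.1 = a ∧ f p.1 p.2.2 = a} with hT
  have hTm : MeasurableSet T :=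
    (hf1 (measurableSet_singleton a)).inter (hf2 (measurableSet_singleton a))
  set D : Set ((Fin k → ℝ) × ((Fin l → ℝ) × (Fin l → ℝ))) :=
    {p | f p.1 p.2.1 - f p.1 p.2.2 = 0} with hD
  have hDm : MeasurableSet D := (hf1.sub hf2) (measurableSet_singleton (0 : ℝ))
  set π : Measure ((Fin k → ℝ) × ((Fin l → ℝ) × (Fin l → ℝ))) := μ.prod (ν.prod ν) with hπ
  haveI : IsProbabilityMeasure π := by rw [hπ]; infer_instance
  -- g x = ν {y | f x y = a}
  set g : (Fin k → ℝ) → ℝ := fun x => (ν {y | f x y = a}).toReal with hg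
  have hsec : ∀ x : Fin k → ℝ, MeasurableSet {y : Fin l → ℝ | f x y = a} := fun x =>
    (hf.comp (measurable_prodMk_left)) (measurableSet_singleton a)
  have hgm : Measurable fun x => ν {y : Fin l → ℝ | f x y = a} := by
    have : ∀ x, {y : Fin l → ℝ | f x y = a} = Prod.mk x ⁻¹' {q : _ × _ | f q.1 q.2 = a} := by
      intro x; rfl
    simp_rw [this]
    exact measurable_measure_prodMk_left (hf (measurableSet_singleton a))
  have hgle : ∀ x, ν {y : Fin l → ℝ | f x y = a} ≤ 1 := fun x => prob_le_one
  -- π S = ∫⁻ g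
  have hπS : π S = ∫⁻ x, ν {y | f x y = a} ∂μ := by
    rw [hπ, Measure.prod_apply hSm]
    congr 1
    ext x
    have : Prod.mk x ⁻¹' S = {y : Fin l → ℝ | f x y = a} ×ˢ Set.univ := by
      ext q; simp [hS, Set.mem_prod]
    rw [this, Measure.prod_prod, measure_univ, mul_one]
  have hπT : π T = ∫⁻ x, ν {y | f x y = a} * ν {y | f x y = a} ∂μ := by
    rw [hπ, Measure.prod_apply hTm]
    congr 1
    ext x
    have : Prod.mk x ⁻¹' T = {y : Fin l → ℝ | f x y = a} ×ˢ {y : Fin l → ℝ | f x y = a} := by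
      ext q; simp [hT, Set.mem_prod]
    rw [this, Measure.prod_prod]
  -- toReal versions via Bochner integrals
  have hfin : ∀ᵐ x ∂μ, ν {y : Fin l → ℝ | f x y = a} < ⊤ :=
    Filter.Eventually.of_forall fun x => lt_of_le_of_lt (hgle x) ENNReal.one_lt_top
  have hIS : (π S).toReal = ∫ x, g x ∂μ := by
    rw [hπS, ← integral_toReal hgm.aemeasurable hfin]
  have hIT : (π T).toReal = ∫ x, g x ^ 2 ∂μ := by
    rw [hπT, ← integral_toReal (f := fun x => ν {y | f x y = a} * ν {y | f x y = a}) (hgm.mul hgm).aemeasurable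
      (Filter.Eventually.of_forall fun x =>
        lt_of_le_of_lt (mul_le_mul' (hgle x) (hgle x)) (by norm_num))]
    congr 1
    ext x
    rw [ENNReal.toReal_mul, hg, sq]
  -- Cauchy–Schwarz via variance
  have hgmemlp : MemLp g 2 μ := by
    refine MemLp.of_bound hgm.ennreal_toReal.aestronglyMeasurable 1
      (Filter.Eventually.of_forall fun x => ?_)
    rw [Real.norm_eq_abs, abs_of_nonneg ENNReal.toReal_nonneg]
    exact ENNReal.toReal_le_of_le_ofReal zero_le_one (by simpa using hgle x)
  have hCS : (∫ x, g x ∂μ) ^ 2 ≤ ∫ x, g x ^ 2 ∂μ := by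
    have h := variance_nonneg g μ
    rw [variance_eq_sub hgmemlp] at h
    have : (∫ x, (g ^ 2) x ∂μ) = ∫ x, g x ^ 2 ∂μ := by simp [Pi.pow_apply]
    linarith [sub_nonneg.1 h, this ▸ sub_nonneg.1 h]
  -- T ⊆ D
  have hTD : π T ≤ π D := measure_mono (by
    intro p hp
    simp only [hT, Set.mem_setOf_eq] at hp
    simp [hD, hp.1, hp.2])
  -- identify probabilities with π
  have hPS : ℙ {ω | f (X ω) (Y ω) = a} = π S := by
    rw [← hmap3, Measure.map_apply hZ hSm]
    rfl
  have hPD : ℙ {ω | f (X ω) (Y ω) - f (X ω) (Y' ω) = 0} = π D := by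
    rw [← hmap3, Measure.map_apply hZ hDm]
    rfl
  calc (ℙ {ω | f (X ω) (Y ω) = a}).toReal ^ 2 = (∫ x, g x ∂μ) ^ 2 := by rw [hPS, hIS]
    _ ≤ ∫ x, g x ^ 2 ∂μ := hCS
    _ = (π T).toReal := hIT.symm
    _ ≤ (π D).toReal := ENNReal.toReal_mono (measure_ne_top π D) hTD
    _ = _ := by rw [hPD]
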